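/- arXiv:1402.2130 — 2 statements merged into one kernel-verified Lean document; each statement's English description precedes it below -/
import Mathlib

section
/- The real vector space of all functions u : 𝔻 → ℝ that are harmonic on 𝔻 and for which there exists a countable set E ⊆ ∂𝔻 such that u has nontangential limit 0 at every point of ∂𝔻 \ E, is infinite-dimensional (it contains an infinite linearly independent family). -/
open Complex MeasureTheory Filter Set

noncomputable section

def unitDisk : Set ℂ := {z : ℂ | ‖z‖ < 1}

/-- `u` is harmonic on the open unit disk: twice continuously differentiable and
`Δu = 0` there. -/
def HarmonicOnDisk (u : ℂ → ℝ) : Prop :=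
  ContDiffOn ℝ 2 u unitDisk ∧
  ∀ z ∈ unitDisk,
    iteratedFDeriv ℝ 2 u z ![1, 1] + iteratedFDeriv ℝ 2 u z ![Complex.I, Complex.I] = 0

/-- `u` has nontangential limit `L` at the boundary point `ζ` : for every `c > 0`,
`u z → L` as `z → ζ` within the Stolz sector `{z ∈ 𝔻 : |z - ζ| ≤ c (1 - |z|)}`. -/
def HasNTLimit (u : ℂ → ℝ) (ζ : ℂ) (L : ℝ) : Prop :=
  ∀ c : ℝ, 0 < c →
    Filter.Tendsto u
      (nhdsWithin ζ {z : ℂ | ‖z‖ < 1 ∧ ‖z - ζ‖ ≤ c * (1 - ‖z‖)})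
      (nhds L)

/-- boundary points -/
def myZeta (n : ℕ) : ℂ := ((n : ℂ) + Complex.I) / ((n : ℂ) - Complex.I)

lemma myZeta_denom_ne (n : ℕ) : (n : ℂ) - Complex.I ≠ 0 := by
  intro h
  have := congrArg Complex.im h
  simp at this

lemma myZeta_num_ne (n : ℕ) : (n : ℂ) + Complex.I ≠ 0 := by
  intro h
  have := congrArg Complex.im h
  simp at this

lemma myZeta_abs (n : ℕ) : ‖myZeta n‖ = 1 := by
  have h1 : ‖(n : ℂ) - Complex.I‖ = ‖(n : ℂ) + Complex.I‖ := by
    have : (starRingEnd ℂ) ((n : ℂ) + Complex.I) = (n : ℂ) - Complex.I := by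
      simp [map_add, Complex.conj_I, sub_eq_add_neg]
    rw [← this, Complex.norm_conj]
  rw [myZeta, norm_div, h1, div_self]
  exact norm_ne_zero_iff.mpr (myZeta_num_ne n)

lemma myZeta_ne_zero (n : ℕ) : myZeta n ≠ 0 := by
  intro h
  have := myZeta_abs n
  rw [h] at this
  simp at this

lemma myZeta_inj : Function.Injective myZeta := by
  intro m n h
  unfold myZeta at h
  rw [div_eq_div_iff (myZeta_denom_ne m) (myZeta_denom_ne n)] at h
  have h2 : (2 : ℂ) * Complex.I * (m : ℂ) = 2 * Complex.I * (n : ℂ) := by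
    linear_combination -h
  have h3 : (m : ℂ) = (n : ℂ) :=
    mul_left_cancel₀ (by simp [Complex.I_ne_zero]) h2
  exact_mod_cast h3

/-- the Poisson-kernel type function -/
def pk (ζ : ℂ) (z : ℂ) : ℂ := (ζ + z) / (ζ - z)

lemma harmonic_pk_re {ζ : ℂ} (hζ : ‖ζ‖ = 1) :
    HarmonicOnDisk (fun z => (pk ζ z).re) := by
  set U : Set ℂ := {z : ℂ | z ≠ ζ} with hU
  have hUopen : IsOpen U := isOpen_ne
  have hsub : unitDisk ⊆ U := by
    intro z hz
    simp only [hU, mem_setOf_eq]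
    intro h
    rw [unitDisk, mem_setOf_eq, h, hζ] at hz
    exact lt_irrefl _ hz
  have hg : DifferentiableOn ℂ (pk ζ) U := by
    apply DifferentiableOn.div
    · exact (differentiable_const _ |>.add differentiable_id).differentiableOn
    · exact (differentiable_const _ |>.sub differentiable_id).differentiableOn
    · intro z hz
      exact sub_ne_zero.mpr (fun h => hz h.symm)
  constructor
  · have : ContDiffOn ℂ 2 (pk ζ) U := hg.contDiffOn hUopen
    have := (this.restrict_scalars ℝ)
    exact (Complex.reCLM.contDiff.comp_contDiffOn this).mono hsub
  · intro z hz
    have hzU : z ∈ U := hsub hz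
    -- Φ c v = (c * v).re
    set Φ : ℂ →L[ℝ] (ℂ →L[ℝ] ℝ) :=
      (ContinuousLinearMap.compL ℝ ℂ ℂ ℝ Complex.reCLM).comp (ContinuousLinearMap.mul ℝ ℂ) with hΦ
    have hΦ_apply : ∀ c v : ℂ, Φ c v = (c * v).re := by
      intro c v; rfl
    -- step 1 : fderiv of u on U
    have step1 : ∀ y ∈ U, fderiv ℝ (fun z => (pk ζ z).re) y = Φ (deriv (pk ζ) y) := by
      intro y hy
      have hd : DifferentiableAt ℂ (pk ζ) y :=
        (hg y hy).differentiableAt (hUopen.mem_nhds hy)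
      have h1 : HasFDerivAt (pk ζ)
          ((ContinuousLinearMap.smulRight (1 : ℂ →L[ℂ] ℂ) (deriv (pk ζ) y)).restrictScalars ℝ) y :=
        (hd.hasDerivAt.hasFDerivAt).restrictScalars ℝ
      have h2 : HasFDerivAt (fun z => (pk ζ z).re)
          (Complex.reCLM.comp
            ((ContinuousLinearMap.smulRight (1 : ℂ →L[ℂ] ℂ) (deriv (pk ζ) y)).restrictScalars ℝ)) y :=
        (Complex.reCLM.hasFDerivAt.comp y h1)
      rw [h2.fderiv]
      ext v
      simp [hΦ_apply, mul_comm]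
    -- analyticity of deriv
    have hanal : AnalyticOnNhd ℂ (deriv (pk ζ)) U :=
      (hg.analyticOnNhd hUopen).deriv
    have hd2 : DifferentiableAt ℂ (deriv (pk ζ)) z :=
      (hanal z hzU).differentiableAt
    have hd2r : DifferentiableAt ℝ (deriv (pk ζ)) z := hd2.restrictScalars ℝ
    -- step 3
    have hev : fderiv ℝ (fun z => (pk ζ z).re) =ᶠ[nhds z] fun y => Φ (deriv (pk ζ) y) := by
      filter_upwards [hUopen.mem_nhds hzU] with y hy using step1 y hy
    have key : fderiv ℝ (fderiv ℝ (fun z => (pk ζ z).re)) z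
        = Φ.comp (fderiv ℝ (deriv (pk ζ)) z) := by
      rw [hev.fderiv_eq]
      exact (Φ.hasFDerivAt.comp z hd2r.hasFDerivAt).fderiv
    have hfd : fderiv ℝ (deriv (pk ζ)) z =
        (ContinuousLinearMap.smulRight (1 : ℂ →L[ℂ] ℂ) (deriv (deriv (pk ζ)) z)).restrictScalars ℝ :=
      ((hd2.hasDerivAt.hasFDerivAt).restrictScalars ℝ).fderiv
    set c := deriv (deriv (pk ζ)) z with hc
    have hval : ∀ v w : ℂ,
        iteratedFDeriv ℝ 2 (fun z => (pk ζ z).re) z ![v, w] = (v * c * w).re := by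
      intro v w
      rw [iteratedFDeriv_two_apply, key, hfd]
      simp [hΦ_apply]
    rw [hval 1 1, hval Complex.I Complex.I]
    have hIc : Complex.I * c * Complex.I = -c := by
      rw [mul_comm Complex.I c, mul_assoc, Complex.I_mul_I, mul_neg_one]
    rw [hIc]
    simp

lemma pk_re_boundary_zero {a b : ℂ} (ha : ‖a‖ = 1) (hb : ‖b‖ = 1)
    (hab : a ≠ b) : (pk a b).re = 0 := by
  have ha0 : a ≠ 0 := by intro h; rw [h] at ha; simp at ha
  have hb0 : b ≠ 0 := by intro h; rw [h] at hb; simp at hb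
  have hab' : a - b ≠ 0 := sub_ne_zero.mpr hab
  have hba : b - a ≠ 0 := sub_ne_zero.mpr (Ne.symm hab)
  have hconj : (starRingEnd ℂ) (pk a b) = -(pk a b) := by
    rw [pk, map_div₀, map_add, map_sub,
      ← Complex.inv_eq_conj (by rw [ha]),
      ← Complex.inv_eq_conj (by rw [hb])]
    field_simp
    ring
  have h4 := Complex.add_conj (pk a b)
  rw [hconj, add_neg_cancel] at h4
  have h5 : 2 * (pk a b).re = 0 := by exact_mod_cast h4.symm
  linarith

/-- The space of harmonic functions on the unit disk having nontangential limit `0` at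
every boundary point outside some countable exceptional set is infinite dimensional:
it contains an infinite linearly independent family. -/
theorem infinite_dim_of_harmonic_with_countable_exceptional_set :
    ∃ f : ℕ → (ℂ → ℝ),
      (∀ n : ℕ, HarmonicOnDisk (f n) ∧
        ∃ E : Set ℂ, E.Countable ∧ E ⊆ {z : ℂ | ‖z‖ = 1} ∧
          ∀ ζ : ℂ, ‖ζ‖ = 1 → ζ ∉ E → HasNTLimit (f n) ζ 0) ∧
      LinearIndependent ℝ (fun n : ℕ => unitDisk.restrict (f n)) := by
  refine ⟨fun n z => (pk (myZeta n) z).re, fun n => ⟨harmonic_pk_re (myZeta_abs n),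
    {myZeta n}, countable_singleton _, ?_, ?_⟩, ?_⟩
  · intro z hz
    rw [mem_singleton_iff] at hz
    subst hz
    exact myZeta_abs n
  · intro ζ hζ hne c hc
    have hsub : myZeta n - ζ ≠ 0 := by
      rw [sub_ne_zero]
      intro h
      exact hne (by rw [mem_singleton_iff, h])
    have hcont : ContinuousAt (fun z => (pk (myZeta n) z).re) ζ := by
      apply Complex.continuous_re.continuousAt.comp
      exact ContinuousAt.div ((continuous_const.add continuous_id).continuousAt)
        ((continuous_const.sub continuous_id).continuousAt) hsub
    have hval : (pk (myZeta n) ζ).re = 0 :=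
      pk_re_boundary_zero (myZeta_abs n) hζ (fun h => hne (by rw [mem_singleton_iff, h]))
    have := hcont.tendsto
    rw [hval] at this
    exact this.mono_left nhdsWithin_le_nhds
  · rw [linearIndependent_iff']
    intro s cc hsum n hn
    set ζn := myZeta n with hζn
    set F := nhdsWithin (1 : ℝ) (Ioo (0:ℝ) 1) with hF
    haveI : F.NeBot := right_nhdsWithin_Ioo_neBot (by norm_num : (0:ℝ) < 1)
    set H : ℝ → ℝ := fun t => ∑ i ∈ s, cc i * ((1 - t) * (pk (myZeta i) ((t:ℂ) * ζn)).re)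
      with hH
    have hzero : ∀ t : ℝ, t ∈ Ioo (0:ℝ) 1 → H t = 0 := by
      intro t ht
      have hmem : (t:ℂ) * ζn ∈ unitDisk := by
        simp only [unitDisk, mem_setOf_eq, norm_mul, Complex.norm_real, Real.norm_eq_abs, hζn, myZeta_abs,
          mul_one]
        rw [abs_of_pos ht.1]
        exact ht.2
      have h1 := congrFun hsum ⟨(t:ℂ) * ζn, hmem⟩
      simp only [Finset.sum_apply, Pi.smul_apply, restrict_apply, smul_eq_mul,
        Pi.zero_apply] at h1
      show (∑ i ∈ s, cc i * ((1 - t) * (pk (myZeta i) ((t:ℂ) * ζn)).re)) = 0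
      have : ∀ i ∈ s, cc i * ((1 - t) * (pk (myZeta i) ((t:ℂ) * ζn)).re)
          = (1 - t) * (cc i * (pk (myZeta i) ((t:ℂ) * ζn)).re) := by
        intro i _; ring
      rw [Finset.sum_congr rfl this, ← Finset.mul_sum,
        show ∑ i ∈ s, cc i * (pk (myZeta i) ((t:ℂ) * ζn)).re = 0 from h1, mul_zero]
    have h0 : Tendsto H F (nhds 0) := by
      apply Tendsto.congr' _ tendsto_const_nhds
      filter_upwards [eventually_mem_nhdsWithin] with t ht
      exact (hzero t ht).symm
    have hterm : ∀ i ∈ s, Tendsto (fun t : ℝ => cc i * ((1 - t) * (pk (myZeta i) ((t:ℂ) * ζn)).re))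
        F (nhds (if i = n then 2 * cc n else 0)) := by
      intro i _
      by_cases hi : i = n
      · subst hi
        simp only [if_pos rfl]
        have heq : ∀ t : ℝ, t ∈ Ioo (0:ℝ) 1 →
            cc i * ((1 - t) * (pk (myZeta i) ((t:ℂ) * ζn)).re) = cc i * (1 + t) := by
          intro t ht
          have ht1 : (1:ℝ) - t ≠ 0 := by
            have := ht.2; intro h; linarith [sub_eq_zero.mp h]
          have hpk : pk (myZeta i) ((t:ℂ) * ζn) = (((1 + t)/(1 - t) : ℝ) : ℂ) := by
            rw [pk, hζn]
            have hnum : myZeta i + (t:ℂ) * myZeta i = myZeta i * (1 + (t:ℂ)) := by ring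
            have hden : myZeta i - (t:ℂ) * myZeta i = myZeta i * (1 - (t:ℂ)) := by ring
            rw [hnum, hden, mul_div_mul_left _ _ (myZeta_ne_zero i)]
            push_cast
            ring
          rw [hpk, Complex.ofReal_re, mul_div_cancel₀ _ ht1]
        apply Tendsto.congr' 
        · filter_upwards [eventually_mem_nhdsWithin] with t ht
          exact (heq t ht).symm
        · have : Tendsto (fun t : ℝ => cc i * (1 + t)) (nhds 1) (nhds (cc i * (1 + 1))) :=
            (continuous_const.mul (continuous_const.add continuous_id)).tendsto 1
          have h2 : cc i * (1 + 1) = 2 * cc i := by ring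
          rw [h2] at this
          exact this.mono_left nhdsWithin_le_nhds
      · simp only [if_neg hi]
        have hne2 : myZeta i - ζn ≠ 0 :=
          sub_ne_zero.mpr (fun h => hi (myZeta_inj h))
        have hc1 : Tendsto (fun t : ℝ => (pk (myZeta i) ((t:ℂ) * ζn)).re) (nhds 1)
            (nhds ((pk (myZeta i) ζn).re)) := by
          have hmap : Tendsto (fun t : ℝ => (t:ℂ) * ζn) (nhds 1) (nhds ζn) := by
            have hcm : Continuous (fun t : ℝ => (t:ℂ) * ζn) :=
              Complex.continuous_ofReal.mul continuous_const
            have := hcm.tendsto (1:ℝ)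
            simpa using this
          have hcont : ContinuousAt (fun z => (pk (myZeta i) z).re) ζn := by
            apply Complex.continuous_re.continuousAt.comp
            exact ContinuousAt.div ((continuous_const.add continuous_id).continuousAt)
              ((continuous_const.sub continuous_id).continuousAt) hne2
          exact hcont.tendsto.comp hmap
        have h1t : Tendsto (fun t : ℝ => (1:ℝ) - t) (nhds 1) (nhds 0) := by
          have hcs : Continuous (fun t : ℝ => (1:ℝ) - t) := continuous_const.sub continuous_id
          have := hcs.tendsto (1:ℝ)
          simpa using this
        have := (tendsto_const_nhds (x := cc i)).mul (h1t.mul hc1)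
        simp only [zero_mul, mul_zero] at this
        exact this.mono_left nhdsWithin_le_nhds
    have h2 : Tendsto H F (nhds (∑ i ∈ s, if i = n then 2 * cc n else 0)) :=
      tendsto_finset_sum s hterm
    rw [Finset.sum_ite_eq' s n (fun _ => 2 * cc n), if_pos hn] at h2
    have := tendsto_nhds_unique h2 h0
    linarith

end
end

section
/- The real vector space of all functions u : 𝔻 → ℝ that are harmonic on 𝔻 and have nontangential limit 0 at almost every point of ∂𝔻 (with respect to arc-length measure on the circle) is infinite-dimensional. -/
open Complex MeasureTheory Filter Set

noncomputable section

namespace AuxNT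

/-- the linear map sending a complex-linear map `L : ℂ → ℂ` to the real-linear map
`v ↦ (L v).re`. -/
def Ψ : (ℂ →L[ℂ] ℂ) →L[ℝ] (ℂ →L[ℝ] ℝ) :=
  (ContinuousLinearMap.compL ℝ ℂ ℂ ℝ Complex.reCLM).comp
    (ContinuousLinearMap.restrictScalarsL ℂ ℂ ℂ ℝ ℝ)

lemma Ψ_apply (L : ℂ →L[ℂ] ℂ) (v : ℂ) : Ψ L v = (L v).re := rfl

lemma re_laplacian {h : ℂ → ℂ} {U : Set ℂ} (hU : IsOpen U) (hd : DifferentiableOn ℂ h U)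
    {z : ℂ} (hz : z ∈ U) :
    iteratedFDeriv ℝ 2 (fun w => (h w).re) z ![1, 1]
      + iteratedFDeriv ℝ 2 (fun w => (h w).re) z ![Complex.I, Complex.I] = 0 := by
  set u : ℂ → ℝ := fun w => (h w).re with hu
  have hdiff : ∀ w ∈ U, DifferentiableAt ℂ h w := fun w hw =>
    (hd w hw).differentiableAt (hU.mem_nhds hw)
  have hfd : ∀ w ∈ U, HasFDerivAt u (Ψ (fderiv ℂ h w)) w := by
    intro w hw
    exact Complex.reCLM.hasFDerivAt.comp w (((hdiff w hw).hasFDerivAt).restrictScalars ℝ)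
  have hev : fderiv ℝ u =ᶠ[nhds z] fun w => Ψ (fderiv ℂ h w) := by
    filter_upwards [hU.mem_nhds hz] with w hw
    exact (hfd w hw).fderiv
  have han : AnalyticAt ℂ h z := hd.analyticAt (hU.mem_nhds hz)
  have h2 : DifferentiableAt ℂ (fderiv ℂ h) z := han.fderiv.differentiableAt
  set A := fderiv ℂ (fderiv ℂ h) z with hA
  have h3 : HasFDerivAt (fun w => Ψ (fderiv ℂ h w)) (Ψ.comp (A.restrictScalars ℝ)) z :=
    Ψ.hasFDerivAt.comp z ((h2.hasFDerivAt).restrictScalars ℝ)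
  have h4 : fderiv ℝ (fderiv ℝ u) z = Ψ.comp (A.restrictScalars ℝ) :=
    (h3.congr_of_eventuallyEq hev).fderiv
  have key : ∀ v : ℂ, iteratedFDeriv ℝ 2 u z ![v, v] = ((A v) v).re := by
    intro v
    rw [iteratedFDeriv_two_apply, h4]
    simp [Ψ_apply]
  have hAI : (A I) I = - (A 1 1) := by
    have e1 : A I = I • (A 1) := by simpa using A.map_smul I 1
    have e2 : (A 1) I = I • (A 1 1) := by simpa using (A 1).map_smul I 1
    rw [e1]
    simp only [ContinuousLinearMap.smul_apply, e2, smul_eq_mul]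
    rw [← mul_assoc, Complex.I_mul_I]
    ring
  rw [key 1, key I, hAI]
  simp

lemma re_contDiffOn {h : ℂ → ℂ} {U : Set ℂ} (hU : IsOpen U) (hd : DifferentiableOn ℂ h U) :
    ContDiffOn ℝ 2 (fun w => (h w).re) U := by
  have h1 : ContDiffOn ℂ 2 h U := hd.contDiffOn hU
  have h2 : ContDiffOn ℝ 2 h U := h1.restrict_scalars ℝ
  exact Complex.reCLM.contDiff.comp_contDiffOn h2

/-- odd powers of purely imaginary numbers are purely imaginary -/
lemma odd_pow_re_eq_zero {w : ℂ} (hw : w.re = 0) (n : ℕ) : (w ^ (2 * n + 1)).re = 0 := by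
  have hwI : w = (w.im : ℂ) * I := by
    apply Complex.ext <;> simp [hw]
  rw [hwI, mul_pow]
  have hI : (I : ℂ) ^ (2 * n + 1) = (-1) ^ n * I := by
    rw [pow_succ, pow_mul, Complex.I_sq]
  rw [hI]
  rcases neg_one_pow_eq_or ℂ n with hn | hn <;> rw [hn] <;>
    simp [← Complex.ofReal_pow, Complex.mul_re]

end AuxNT

/-- The space of harmonic functions on the unit disk having nontangential limit `0` at
almost every boundary point `e^{iΘ}`, `Θ ∈ [0, 2π)` (w.r.t. arc length, i.e. Lebesgue
measure in `Θ`), is infinite dimensional. -/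
theorem infinite_dim_of_harmonic_with_ae_zero_nontangential_limits :
    ∃ f : ℕ → (ℂ → ℝ),
      (∀ n : ℕ, HarmonicOnDisk (f n) ∧
        ∀ᵐ (Θ : ℝ) ∂(volume.restrict (Set.Ico (0 : ℝ) (2 * Real.pi))),
          HasNTLimit (f n) (Complex.exp (Θ * Complex.I)) 0) ∧
      LinearIndependent ℝ (fun n : ℕ => unitDisk.restrict (f n)) := by
  classical
  set U : Set ℂ := {z : ℂ | z ≠ 1} with hUdef
  have hU : IsOpen U := isOpen_ne
  set h : ℕ → ℂ → ℂ := fun n z => ((1 + z) / (1 - z)) ^ (2 * n + 1) with hhdef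
  set f : ℕ → ℂ → ℝ := fun n z => (h n z).re with hfdef
  have hdsub : unitDisk ⊆ U := by
    intro z hz
    simp only [hUdef, mem_setOf_eq]
    intro hz1
    rw [hz1] at hz
    simp [unitDisk] at hz
  have hd : ∀ n, DifferentiableOn ℂ (h n) U := by
    intro n
    apply DifferentiableOn.pow
    apply DifferentiableOn.div
    · exact (differentiable_const _ |>.add differentiable_id).differentiableOn
    · exact (differentiable_const _ |>.sub differentiable_id).differentiableOn
    · intro z hz
      rw [sub_ne_zero]
      exact fun e => hz e.symm
  refine ⟨f, fun n => ⟨⟨?_, ?_⟩, ?_⟩, ?_⟩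
  · exact (AuxNT.re_contDiffOn hU (hd n)).mono hdsub
  · intro z hz
    exact AuxNT.re_laplacian hU (hd n) (hdsub hz)
  · -- a.e. nontangential limit 0
    have hcount : Set.Countable {Θ : ℝ | Complex.exp (Θ * I) = 1} := by
      apply (Set.countable_range (fun k : ℤ => (k : ℝ) * (2 * Real.pi))).mono
      intro Θ hΘ
      simp only [mem_setOf_eq, Complex.exp_eq_one_iff] at hΘ
      obtain ⟨k, hk⟩ := hΘ
      refine ⟨k, ?_⟩
      have : (Θ : ℂ) = (k : ℂ) * (2 * Real.pi) := by
        have h2 : (Θ : ℂ) * I = ((k : ℂ) * (2 * Real.pi)) * I := by rw [hk]; ring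
        exact mul_right_cancel₀ Complex.I_ne_zero h2
      exact_mod_cast this.symm
    have h0 : (volume : Measure ℝ) {Θ : ℝ | Complex.exp (Θ * I) = 1} = 0 :=
      hcount.measure_zero _
    have hae : ∀ᵐ Θ : ℝ, Complex.exp (Θ * I) ≠ 1 := by
      rw [ae_iff]
      simpa [not_not] using h0
    filter_upwards [ae_restrict_of_ae hae] with Θ hΘ
    intro c _
    set ζ : ℂ := Complex.exp (Θ * I) with hζdef
    have habs : ‖ζ‖ = 1 := Complex.norm_exp_ofReal_mul_I Θ
    have hζ0 : ζ ≠ 0 := Complex.exp_ne_zero _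
    have hζ1 : ζ ≠ 1 := hΘ
    have hsub : (1 : ℂ) - ζ ≠ 0 := by rw [sub_ne_zero]; exact fun e => hζ1 e.symm
    -- the boundary value is 0
    have hwre : ((1 + ζ) / (1 - ζ)).re = 0 := by
      have hconj : (starRingEnd ℂ) ζ = ζ⁻¹ := by
        rw [hζdef, ← Complex.exp_conj]
        rw [← Complex.exp_neg]
        congr 1
        simp [Complex.conj_I]
      have hc1 : (starRingEnd ℂ) ζ ≠ 1 := by
        intro e
        apply hζ1
        have := congrArg (starRingEnd ℂ) e
        simpa using this
      have hcsub : (1 : ℂ) - (starRingEnd ℂ) ζ ≠ 0 := by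
        rw [sub_ne_zero]; exact fun e => hc1 e.symm
      have hprod : ζ * (starRingEnd ℂ) ζ = 1 := by
        rw [hconj, mul_inv_cancel₀ hζ0]
      have hsum : (1 + ζ) / (1 - ζ) + (starRingEnd ℂ) ((1 + ζ) / (1 - ζ)) = 0 := by
        rw [map_div₀, map_add, map_sub, map_one]
        field_simp
        linear_combination (-2 : ℂ) * hprod
      have h2re : ((1 + ζ) / (1 - ζ)).re + ((1 + ζ) / (1 - ζ)).re = 0 := by
        have hre := congrArg Complex.re hsum
        rw [Complex.add_re, Complex.conj_re] at hre
        simpa using hre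
      linarith
    have hval : f n ζ = 0 := by
      simp only [hfdef, hhdef]
      exact AuxNT.odd_pow_re_eq_zero hwre n
    have hcont : ContinuousAt (f n) ζ := by
      apply Complex.continuous_re.continuousAt.comp
      apply ContinuousAt.pow
      exact (continuousAt_const.add continuousAt_id).div
        (continuousAt_const.sub continuousAt_id) hsub
    have := hcont.tendsto.mono_left (nhdsWithin_le_nhds
      (s := {z : ℂ | ‖z‖ < 1 ∧ ‖z - ζ‖ ≤ c * (1 - ‖z‖)}))
    rwa [hval] at this
  · -- linear independence
    rw [linearIndependent_iff']
    intro s g hsum j hj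
    set p : Polynomial ℝ := ∑ i ∈ s, Polynomial.C (g i) * Polynomial.X ^ (2 * i + 1) with hpdef
    have hroot : ∀ t : ℝ, 1 ≤ t → p.eval t = 0 := by
      intro t ht
      have ht1 : (0 : ℝ) < t + 1 := by linarith
      set x : ℝ := (t - 1) / (t + 1) with hxdef
      have hx0 : 0 ≤ x := div_nonneg (by linarith) ht1.le
      have hx1 : x < 1 := (div_lt_one ht1).mpr (by linarith)
      have hmem : (x : ℂ) ∈ unitDisk := by
        simp only [unitDisk, mem_setOf_eq, Complex.norm_real, Real.norm_eq_abs]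
        rw [_root_.abs_of_nonneg hx0]; exact hx1
      have hxne : (1 : ℝ) - x ≠ 0 := by linarith
      have hxt : (1 + x) / (1 - x) = t := by
        rw [hxdef]
        have h2 : (1 : ℝ) - (t - 1) / (t + 1) ≠ 0 := by
          rw [sub_ne_zero]
          intro hzero
          have := (div_eq_one_iff_eq (ne_of_gt ht1)).mp hzero.symm
          linarith
        rw [div_eq_iff h2]
        field_simp
        ring
      have hfix : ∀ i, f i (x : ℂ) = t ^ (2 * i + 1) := by
        intro i
        have hcast : (1 + (x : ℂ)) / (1 - (x : ℂ)) = (((1 + x) / (1 - x) : ℝ) : ℂ) := by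
          push_cast
          ring
        show ((((1 + (x : ℂ)) / (1 - (x : ℂ)))) ^ (2 * i + 1)).re = t ^ (2 * i + 1)
        rw [hcast, hxt, ← Complex.ofReal_pow, Complex.ofReal_re]
      have heval := congrFun hsum ⟨(x : ℂ), hmem⟩
      simp only [Finset.sum_apply, Pi.smul_apply, Set.restrict_apply, smul_eq_mul,
        Pi.zero_apply] at heval
      rw [hpdef]
      rw [Polynomial.eval_finset_sum]
      rw [← heval]
      apply Finset.sum_congr rfl
      intro i _
      rw [show unitDisk.restrict (f i) ⟨(x : ℂ), hmem⟩ = f i x from rfl, hfix i]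
      simp
    have hp : p = 0 := by
      apply p.eq_zero_of_infinite_isRoot
      apply Set.Infinite.mono (s := Set.Ici (1 : ℝ))
      · intro t ht
        exact hroot t ht
      · exact Set.Ici_infinite 1
    have hcoeff : p.coeff (2 * j + 1) = g j := by
      rw [hpdef, Polynomial.finset_sum_coeff]
      have hterm : ∀ i, (Polynomial.C (g i) * Polynomial.X ^ (2 * i + 1)).coeff (2 * j + 1)
          = if i = j then g i else 0 := by
        intro i
        rw [Polynomial.coeff_C_mul, Polynomial.coeff_X_pow]
        by_cases hij : i = j
        · simp [hij]
        · have : ¬(2 * j + 1 = 2 * i + 1) := by omega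
          simp [hij, this, Ne.symm hij]
      simp_rw [hterm]
      rw [Finset.sum_ite_eq' s j g]
      simp [hj]
    rw [hp] at hcoeff
    simpa using hcoeff.symm

end
end
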